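/- Let R be a finite Frobenius ring and g ∈ R^k nonzero. Then Σ_{x ∈ R^k} w_hom(x·g)² = |R|^k + |R|^k / |gR^×|, where gR^× = {gu : u ∈ R^×}. -/

import Mathlib

open scoped Classical

/-- The normalized homogeneous weight defined from an additive character. -/
noncomputable def whom {R : Type} [Ring R] [Fintype R] (χ : AddChar R ℂ) (x : R) : ℂ :=
  1 - (Fintype.card Rˣ : ℂ)⁻¹ * ∑ u : Rˣ, χ ((u : R) * x)

/-- A generating character: a character of `(R,+)` whose kernel contains no
nonzero left ideal. -/
def IsGenChar {R : Type} [Ring R] [Fintype R] (χ : AddChar R ℂ) : Prop :=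
  ∀ I : Ideal R, I ≠ ⊥ → ∃ x ∈ I, χ x ≠ 1

set_option linter.unusedSectionVars false
set_option maxHeartbeats 1000000

namespace FrobAux

variable {R : Type} [Ring R] [Fintype R]

lemma chi_ne_zero (χ : AddChar R ℂ) (x : R) : χ x ≠ 0 := by
  intro h
  have h1 : χ x * χ (-x) = 1 := by
    rw [← AddChar.map_add_eq_mul, add_neg_cancel, AddChar.map_zero_eq_one]
  rw [h, zero_mul] at h1
  exact zero_ne_one h1

lemma sum_f_eq_zero (f : R → ℂ) (hf : ∀ a b : R, f (a + b) = f a * f b)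
    {x₀ : R} (hx₀ : f x₀ ≠ 1) : ∑ x : R, f x = 0 := by
  by_contra hs
  have key : f x₀ * ∑ x : R, f x = ∑ x : R, f x := by
    rw [Finset.mul_sum]
    exact Fintype.sum_equiv (Equiv.addLeft x₀) _ _ (fun x => by
      simp [Equiv.addLeft, hf])
  have : f x₀ = 1 := by
    have h2 : f x₀ * ∑ x : R, f x = 1 * ∑ x : R, f x := by rw [one_mul]; exact key
    exact mul_right_cancel₀ hs h2
  exact hx₀ this

/-- Right nondegeneracy: comes directly from the generating property. -/
lemma right_nondeg (χ : AddChar R ℂ) (hχ : IsGenChar χ) {b : R} (hb : b ≠ 0) :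
    ∃ a : R, χ (a * b) ≠ 1 := by
  obtain ⟨x, hxmem, hx⟩ := hχ (Ideal.span {b}) (by
    simpa [Ne, Ideal.span_singleton_eq_bot] using hb)
  rw [Ideal.span, Submodule.mem_span_singleton] at hxmem
  obtain ⟨r, hr⟩ := hxmem
  exact ⟨r, by rwa [← smul_eq_mul, hr]⟩

lemma sum_right_eq_zero (χ : AddChar R ℂ) (hχ : IsGenChar χ) {b : R} (hb : b ≠ 0) :
    ∑ a : R, χ (a * b) = 0 := by
  obtain ⟨a₀, ha₀⟩ := right_nondeg χ hχ hb
  exact sum_f_eq_zero _ (fun a a' => by rw [add_mul, AddChar.map_add_eq_mul]) ha₀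

/-- Left nondegeneracy, via a counting argument. -/
lemma left_nondeg (χ : AddChar R ℂ) (hχ : IsGenChar χ) {a : R} (ha : a ≠ 0) :
    ∃ b : R, χ (a * b) ≠ 1 := by
  by_contra hcon
  push_neg at hcon
  set q : ℂ := (Fintype.card R : ℂ) with hq
  have hq0 : q ≠ 0 := Nat.cast_ne_zero.2 Fintype.card_ne_zero
  set A : Finset R := Finset.univ.filter (fun x : R => ∀ b, χ (x * b) = 1) with hA
  have hdich : ∀ x : R, (∑ b : R, χ (x * b)) = if x ∈ A then q else 0 := by
    intro x
    by_cases h : x ∈ A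
    · rw [if_pos h]
      rw [hA, Finset.mem_filter] at h
      simp [h.2, q, Finset.card_univ]
    · rw [if_neg h]
      rw [hA, Finset.mem_filter] at h
      push_neg at h
      obtain ⟨b₀, hb₀⟩ := h (Finset.mem_univ x)
      exact sum_f_eq_zero _ (fun b b' => by rw [mul_add, AddChar.map_add_eq_mul]) hb₀
  have htot : ∑ x : R, ∑ b : R, χ (x * b) = q := by
    rw [Finset.sum_comm]
    have hinner : ∀ b : R, (∑ x : R, χ (x * b)) = if b = 0 then q else 0 := by
      intro b
      by_cases hb : b = 0
      · simp [hb, q, Finset.card_univ]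
      · rw [if_neg hb]; exact sum_right_eq_zero χ hχ hb
    rw [Finset.sum_congr rfl (fun b _ => hinner b)]
    simp
  have hcount : ∑ x : R, ∑ b : R, χ (x * b) = (A.card : ℂ) * q :=
    calc ∑ x : R, ∑ b : R, χ (x * b) = ∑ x : R, if x ∈ A then q else 0 :=
          Finset.sum_congr rfl (fun x _ => hdich x)
      _ = (A.card : ℂ) * q := by
          rw [Finset.sum_ite_mem, Finset.univ_inter, Finset.sum_const, nsmul_eq_mul]
  have hA1 : A.card = 1 := by
    have h2 : (A.card : ℂ) * q = 1 * q := by rw [one_mul]; exact hcount.symm.trans htot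
    exact_mod_cast mul_right_cancel₀ hq0 h2
  obtain ⟨x, hx⟩ := Finset.card_eq_one.mp hA1
  have h0 : (0 : R) ∈ A := by simp [hA]
  have haA : a ∈ A := by simp [hA, hcon]
  rw [hx, Finset.mem_singleton] at h0 haA
  exact ha (haA.trans h0.symm)

lemma sum_left_eq_zero (χ : AddChar R ℂ) (hχ : IsGenChar χ) {a : R} (ha : a ≠ 0) :
    ∑ b : R, χ (a * b) = 0 := by
  obtain ⟨b₀, hb₀⟩ := left_nondeg χ hχ ha
  exact sum_f_eq_zero _ (fun b b' => by rw [mul_add, AddChar.map_add_eq_mul]) hb₀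

/-- cancel χ-values: from `χ u * χ v = χ v` deduce `χ u = 1`. -/
lemma chi_cancel (χ : AddChar R ℂ) {u v : R} (h : χ u * χ v = χ v) : χ u = 1 := by
  have := chi_ne_zero χ v
  field_simp at h
  exact h

/-- From `∀ x, χ (x * b) = χ (x * b')` deduce `b = b'`. -/
lemma right_unique (χ : AddChar R ℂ) (hχ : IsGenChar χ) {b b' : R}
    (h : ∀ x, χ (x * b) = χ (x * b')) : b = b' := by
  by_contra hne
  obtain ⟨x, hx⟩ := right_nondeg χ hχ (sub_ne_zero.2 hne)
  apply hx
  have key : χ (x * (b - b')) * χ (x * b') = χ (x * b') := by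
    rw [← AddChar.map_add_eq_mul, mul_sub, sub_add_cancel, h x]
  exact chi_cancel χ key

lemma sigma_exists (χ : AddChar R ℂ) (hχ : IsGenChar χ) (a : R) :
    ∃ b : R, ∀ x, χ (a * x) = χ (x * b) := by
  by_contra hcon
  push_neg at hcon
  set q : ℂ := (Fintype.card R : ℂ) with hq
  have hq0 : q ≠ 0 := Nat.cast_ne_zero.2 Fintype.card_ne_zero
  have hzero : ∀ b : R, (∑ x : R, χ (a * x) * χ (x * (-b))) = 0 := by
    intro b
    obtain ⟨x₀, hx₀⟩ := hcon b
    have hadd : ∀ x y : R, (fun x => χ (a * x) * χ (x * (-b))) (x + y)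
        = (fun x => χ (a * x) * χ (x * (-b))) x * (fun x => χ (a * x) * χ (x * (-b))) y := by
      intro x y
      show χ (a * (x + y)) * χ ((x + y) * (-b)) = _
      rw [mul_add, AddChar.map_add_eq_mul, add_mul, AddChar.map_add_eq_mul]
      ring
    have hne : (fun x => χ (a * x) * χ (x * (-b))) x₀ ≠ 1 := by
      show χ (a * x₀) * χ (x₀ * (-b)) ≠ 1
      intro hone
      apply hx₀
      have h1 : χ (x₀ * -b) * χ (x₀ * b) = 1 := by
        rw [← AddChar.map_add_eq_mul, mul_neg, neg_add_cancel, AddChar.map_zero_eq_one]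
      calc χ (a * x₀) = χ (a * x₀) * (χ (x₀ * -b) * χ (x₀ * b)) := by rw [h1, mul_one]
        _ = (χ (a * x₀) * χ (x₀ * -b)) * χ (x₀ * b) := by ring
        _ = χ (x₀ * b) := by rw [hone, one_mul]
    exact sum_f_eq_zero _ hadd hne
  have htot : ∑ b : R, ∑ x : R, χ (a * x) * χ (x * (-b)) = q := by
    rw [Finset.sum_comm]
    have hinner : ∀ x : R, (∑ b : R, χ (a * x) * χ (x * (-b))) = if x = 0 then q else 0 := by
      intro x
      rw [← Finset.mul_sum]
      by_cases hx : x = 0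
      · simp [hx, q, Finset.card_univ]
      · rw [if_neg hx]
        have : ∑ b : R, χ (x * (-b)) = ∑ b : R, χ (x * b) :=
          Fintype.sum_equiv (Equiv.neg R) _ _ (fun b => by simp)
        rw [this, sum_left_eq_zero χ hχ hx, mul_zero]
    rw [Finset.sum_congr rfl (fun x _ => hinner x)]
    simp
  rw [Finset.sum_congr rfl (fun b _ => hzero b), Finset.sum_const, smul_zero] at htot
  exact hq0 htot.symm

variable (χ : AddChar R ℂ) (hχ : IsGenChar χ)

/-- The "Nakayama" map: `χ (a * x) = χ (x * sig a)`. -/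
noncomputable def sig (a : R) : R := Classical.choose (sigma_exists χ hχ a)

lemma sig_spec (a x : R) : χ (a * x) = χ (x * sig χ hχ a) :=
  Classical.choose_spec (sigma_exists χ hχ a) x

lemma sig_zero : sig χ hχ 0 = 0 :=
  right_unique χ hχ (fun x => by
    rw [← sig_spec χ hχ 0 x, zero_mul, mul_zero])

lemma sig_one : sig χ hχ 1 = 1 :=
  right_unique χ hχ (fun x => by
    rw [← sig_spec χ hχ 1 x, one_mul, mul_one])

lemma sig_add (a b : R) : sig χ hχ (a + b) = sig χ hχ a + sig χ hχ b :=
  right_unique χ hχ (fun x => by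
    rw [← sig_spec χ hχ (a + b) x, add_mul, AddChar.map_add_eq_mul,
      sig_spec χ hχ a x, sig_spec χ hχ b x, mul_add, AddChar.map_add_eq_mul])

lemma sig_mul (a b : R) : sig χ hχ (a * b) = sig χ hχ a * sig χ hχ b :=
  right_unique χ hχ (fun x => by
    rw [← sig_spec χ hχ (a * b) x, mul_assoc, sig_spec χ hχ a (b * x),
      ← mul_assoc, ← sig_spec χ hχ b, mul_assoc, sig_spec χ hχ b (x * sig χ hχ a),
      mul_assoc])

lemma sig_inj : Function.Injective (sig χ hχ) := by
  intro a b hab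
  by_contra hne
  obtain ⟨x, hx⟩ := left_nondeg χ hχ (sub_ne_zero.2 hne)
  apply hx
  have key : χ ((a - b) * x) * χ (b * x) = χ (b * x) := by
    rw [← AddChar.map_add_eq_mul, sub_mul, sub_add_cancel, sig_spec χ hχ a x, hab,
      ← sig_spec χ hχ b x]
  exact chi_cancel χ key

/-- The Nakayama ring automorphism. -/
noncomputable def sigE : R ≃+* R :=
  RingEquiv.ofBijective
    ({ toFun := sig χ hχ, map_one' := sig_one χ hχ, map_mul' := sig_mul χ hχ,
       map_zero' := sig_zero χ hχ, map_add' := sig_add χ hχ } : R →+* R)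
    (Finite.injective_iff_bijective.1 (sig_inj χ hχ))

lemma sigE_spec (a x : R) : χ (a * x) = χ (x * sigE χ hχ a) := sig_spec χ hχ a x

end FrobAux

/-- For nonzero `g ∈ R^k`:
`Σ_{x ∈ R^k} w_hom(x·g)² = |R|^k + |R|^k / |gR^×|`, where
`gR^× = {gu : u ∈ R^×}`. -/
theorem sum_whom_dot_sq {R : Type} [Ring R] [Fintype R]
    (χ : AddChar R ℂ) (hχ : IsGenChar χ)
    (k : ℕ) (g : Fin k → R) (hg : g ≠ 0) :
    ∑ x : Fin k → R, (whom χ (∑ i, x i * g i)) ^ 2 =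
      (Fintype.card R : ℂ) ^ k +
        (Fintype.card R : ℂ) ^ k /
          ((Finset.image (fun u : Rˣ => fun i => g i * (u : R)) Finset.univ).card : ℂ) := by
  classical
  obtain ⟨i₀, hi₀⟩ : ∃ i, g i ≠ 0 := by
    by_contra h; push_neg at h; exact hg (funext h)
  simp only [whom]
  set σ : R ≃+* R := FrobAux.sigE χ hχ with hσdef
  have hσ : ∀ a x : R, χ (a * x) = χ (x * σ a) := FrobAux.sigE_spec χ hχ
  set q : ℂ := (Fintype.card R : ℂ) with hqdef
  have hq0 : q ≠ 0 := Nat.cast_ne_zero.2 Fintype.card_ne_zero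
  set nR : ℕ := Fintype.card Rˣ with hnRdef
  have hn0 : (nR : ℂ) ≠ 0 := Nat.cast_ne_zero.2 Fintype.card_ne_zero
  -- the image of a unit under σ is a unit
  have hσu : ∀ u : Rˣ, ((Units.map (σ : R →+* R).toMonoidHom u : Rˣ) : R) = σ (u : R) :=
    fun u => rfl
  -- per-factor character sum
  have hfac : ∀ t b : R, (∑ r : R, χ (t * (r * b))) = if b * σ t = 0 then q else 0 := by
    intro t b
    have hrw : ∀ r : R, χ (t * (r * b)) = χ (r * (b * σ t)) := fun r => by
      rw [hσ t (r * b), mul_assoc]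
    rw [Finset.sum_congr rfl (fun r _ => hrw r)]
    by_cases h : b * σ t = 0
    · simp [h, q, Finset.card_univ]
    · rw [if_neg h]
      exact FrobAux.sum_right_eq_zero χ hχ h
  -- character of a sum
  have hmapsum : ∀ (s : Finset (Fin k)) (f : Fin k → R),
      χ (∑ j ∈ s, f j) = ∏ j ∈ s, χ (f j) := by
    intro s f
    induction s using Finset.cons_induction with
    | empty => simp
    | cons a s ha ih => rw [Finset.sum_cons, Finset.prod_cons, AddChar.map_add_eq_mul, ih]
  -- the key full character sum
  have hP : ∀ t : R, (∑ x : Fin k → R, χ (t * ∑ i, x i * g i))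
      = if ∀ i, g i * σ t = 0 then q ^ k else 0 := by
    intro t
    have h1 : ∀ x : Fin k → R, χ (t * ∑ i, x i * g i) = ∏ i, χ (t * (x i * g i)) := by
      intro x
      rw [Finset.mul_sum, hmapsum]
    have h2 : ∑ x ∈ Fintype.piFinset (fun _ : Fin k => (Finset.univ : Finset R)),
        ∏ i, χ (t * (x i * g i)) = ∏ i, ∑ r : R, χ (t * (r * g i)) :=
      Finset.sum_prod_piFinset Finset.univ (fun i r => χ (t * (r * g i)))
    rw [Finset.sum_congr rfl (fun x _ => h1 x), ← Fintype.piFinset_univ, h2]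
    rw [Finset.prod_congr rfl (fun i _ => hfac t (g i))]
    by_cases hall : ∀ i, g i * σ t = 0
    · rw [if_pos hall]
      rw [Finset.prod_congr rfl (fun i _ => if_pos (hall i)), Finset.prod_const,
        Finset.card_univ, Fintype.card_fin]
    · rw [if_neg hall]
      push_neg at hall
      obtain ⟨i, hi⟩ := hall
      exact Finset.prod_eq_zero (Finset.mem_univ i) (if_neg hi)
  -- middle term
  have hmid : (∑ x : Fin k → R, ∑ u : Rˣ, χ ((u : R) * ∑ i, x i * g i)) = 0 := by
    rw [Finset.sum_comm]
    refine Finset.sum_eq_zero fun u _ => ?_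
    have hnot : ¬ (∀ i, g i * σ (u : R) = 0) := by
      intro hall
      apply hi₀
      set w : Rˣ := Units.map (σ : R →+* R).toMonoidHom u with hw
      calc g i₀ = g i₀ * (w : R) * ((w⁻¹ : Rˣ) : R) := (Units.mul_inv_cancel_right _ _).symm
        _ = 0 := by rw [hσu u, hall i₀, zero_mul]
    rw [hP (u : R), if_neg hnot]
  -- the stabilizer and the orbit
  set Stab : Finset Rˣ := Finset.univ.filter (fun s : Rˣ => ∀ i, g i * (s : R) = g i)
    with hStabdef
  have h1Stab : (1 : Rˣ) ∈ Stab := by simp [hStabdef]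
  set Orb : Finset (Fin k → R) :=
    Finset.image (fun u : Rˣ => fun i => g i * (u : R)) Finset.univ with hOrbdef
  -- orbit-stabilizer
  have horbstab : Orb.card * Stab.card = nR := by
    have hfib : ∀ b ∈ Orb,
        (Finset.univ.filter (fun u : Rˣ => (fun i => g i * (u : R)) = b)).card = Stab.card := by
      intro b hb
      obtain ⟨v, -, hv⟩ := Finset.mem_image.mp hb
      refine Finset.card_nbij' (fun u => u * v⁻¹) (fun s => s * v) ?_ ?_ ?_ ?_
      · intro u hu
        rw [Finset.mem_coe, Finset.mem_filter] at hu
        have hpt : ∀ i, g i * (u : R) = g i * (v : R) := by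
          intro i
          have h1 := congrFun hu.2 i
          have h2 := congrFun hv i
          exact h1.trans h2.symm
        rw [hStabdef, Finset.mem_coe, Finset.mem_filter]
        refine ⟨Finset.mem_univ _, fun i => ?_⟩
        calc g i * ((u * v⁻¹ : Rˣ) : R) = g i * (u : R) * ((v⁻¹ : Rˣ) : R) := by
              rw [Units.val_mul, mul_assoc]
          _ = g i * (v : R) * ((v⁻¹ : Rˣ) : R) := by rw [hpt i]
          _ = g i := Units.mul_inv_cancel_right _ _
      · intro s hs
        simp only [hStabdef, Finset.mem_coe, Finset.mem_filter] at hs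
        rw [Finset.mem_coe, Finset.mem_filter]
        refine ⟨Finset.mem_univ _, ?_⟩
        funext i
        calc g i * ((s * v : Rˣ) : R) = g i * (s : R) * (v : R) := by
              rw [Units.val_mul, mul_assoc]
          _ = g i * (v : R) := by rw [hs.2 i]
          _ = b i := congrFun hv i
      · intro u _; show u * v⁻¹ * v = u; exact inv_mul_cancel_right u v
      · intro s _; show s * v * v⁻¹ = s; exact mul_inv_cancel_right s v
    have huniv : (Finset.univ : Finset Rˣ).card = Orb.card * Stab.card := by
      rw [Finset.card_eq_sum_card_fiberwise
        (f := fun u : Rˣ => fun i => g i * (u : R)) (t := Orb)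
        (fun u _ => Finset.mem_image_of_mem _ (Finset.mem_univ u))]
      rw [Finset.sum_congr rfl hfib, Finset.sum_const, smul_eq_mul]
    rw [hnRdef, ← Finset.card_univ, huniv]
  -- the key condition, rewritten multiplicatively
  have hcondiff : ∀ u v : Rˣ, (∀ i, g i * σ ((u : R) + (v : R)) = 0)
      ↔ (∀ i, g i * (-(σ ((u * v⁻¹ : Rˣ) : R))) = g i) := by
    intro u v
    have hsplit : ((u : R) + (v : R)) = (((u * v⁻¹ : Rˣ) : R) + 1) * (v : R) := by
      rw [add_mul, one_mul, Units.val_mul, mul_assoc, Units.inv_mul, mul_one]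
    refine forall_congr' fun i => ?_
    have h1 : g i * σ ((u : R) + (v : R))
        = (g i * (σ ((u * v⁻¹ : Rˣ) : R) + 1)) * ((Units.map (σ : R →+* R).toMonoidHom v : Rˣ) : R) := by
      rw [hsplit, map_mul, map_add, map_one, hσu v, mul_assoc]
    rw [h1, Units.mul_left_eq_zero, mul_add, mul_one, mul_neg]
    constructor
    · intro h
      rw [add_eq_zero_iff_eq_neg.mp h, neg_neg]
    · intro h
      rw [neg_eq_iff_eq_neg.mp h, neg_add_cancel]
  -- pair count
  have hpair : (Finset.univ.filter
        (fun p : Rˣ × Rˣ => ∀ i, g i * σ ((p.1 : R) + (p.2 : R)) = 0)).card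
      = nR * Stab.card := by
    have hprod : nR * Stab.card = ((Finset.univ : Finset Rˣ) ×ˢ Stab).card := by
      rw [Finset.card_product, Finset.card_univ]
    rw [hprod]
    refine Finset.card_nbij'
      (fun p => (p.2, -(Units.map (σ : R →+* R).toMonoidHom (p.1 * p.2⁻¹))))
      (fun p => (Units.map (σ.symm : R →+* R).toMonoidHom (-p.2) * p.1, p.1)) ?_ ?_ ?_ ?_
    · rintro ⟨u, v⟩ hp
      rw [Finset.mem_coe, Finset.mem_filter] at hp
      have hcond := (hcondiff u v).1 hp.2
      rw [Finset.mem_coe, Finset.mem_product]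
      refine ⟨Finset.mem_univ _, ?_⟩
      rw [hStabdef, Finset.mem_filter]
      refine ⟨Finset.mem_univ _, fun i => ?_⟩
      rw [Units.val_neg, hσu]
      exact hcond i
    · rintro ⟨v, t⟩ hp
      rw [Finset.mem_coe, Finset.mem_product, hStabdef, Finset.mem_filter] at hp
      rw [Finset.mem_coe, Finset.mem_filter]
      refine ⟨Finset.mem_univ _, ?_⟩
      apply (hcondiff (Units.map (σ.symm : R →+* R).toMonoidHom (-t) * v) v).2
      intro i
      have hmv : (Units.map (σ.symm : R →+* R).toMonoidHom (-t) * v) * v⁻¹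
          = Units.map (σ.symm : R →+* R).toMonoidHom (-t) := mul_inv_cancel_right _ _
      rw [hmv]
      have hcoe : ((Units.map (σ.symm : R →+* R).toMonoidHom (-t) : Rˣ) : R)
          = σ.symm (((-t : Rˣ) : R)) := rfl
      rw [hcoe, RingEquiv.apply_symm_apply, Units.val_neg, neg_neg]
      exact hp.2.2 i
    · rintro ⟨u, v⟩ hp
      have h1 : Units.map (σ.symm : R →+* R).toMonoidHom
          (- - Units.map (σ : R →+* R).toMonoidHom (u * v⁻¹)) = u * v⁻¹ := by
        rw [neg_neg]
        ext
        rw [Units.coe_map, Units.coe_map]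
        exact σ.symm_apply_apply _
      show (Units.map (σ.symm : R →+* R).toMonoidHom
          (- - Units.map (σ : R →+* R).toMonoidHom (u * v⁻¹)) * v, v) = (u, v)
      rw [h1, inv_mul_cancel_right]
    · rintro ⟨v, t⟩ hp
      have h1 : (Units.map (σ.symm : R →+* R).toMonoidHom (-t) * v) * v⁻¹
          = Units.map (σ.symm : R →+* R).toMonoidHom (-t) := mul_inv_cancel_right _ _
      show (v, -(Units.map (σ : R →+* R).toMonoidHom
          ((Units.map (σ.symm : R →+* R).toMonoidHom (-t) * v) * v⁻¹))) = (v, t)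
      rw [h1]
      have h2 : Units.map (σ : R →+* R).toMonoidHom
          (Units.map (σ.symm : R →+* R).toMonoidHom (-t)) = -t := by
        ext
        rw [Units.coe_map, Units.coe_map]
        exact σ.apply_symm_apply _
      rw [h2, neg_neg]
  -- the cross term
  have hcross : (∑ x : Fin k → R, (∑ u : Rˣ, χ ((u : R) * ∑ i, x i * g i)) ^ 2)
      = q ^ k * ((nR * Stab.card : ℕ) : ℂ) := by
    have hsq : ∀ y : R, (∑ u : Rˣ, χ ((u : R) * y)) ^ 2
        = ∑ p : Rˣ × Rˣ, χ (((p.1 : R) + (p.2 : R)) * y) := by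
      intro y
      rw [sq, Finset.sum_mul_sum, Fintype.sum_prod_type]
      exact Finset.sum_congr rfl fun u _ => Finset.sum_congr rfl fun v _ => by
        rw [add_mul, AddChar.map_add_eq_mul]
    calc ∑ x : Fin k → R, (∑ u : Rˣ, χ ((u : R) * ∑ i, x i * g i)) ^ 2
        = ∑ x : Fin k → R, ∑ p : Rˣ × Rˣ, χ (((p.1 : R) + (p.2 : R)) * ∑ i, x i * g i) :=
          Finset.sum_congr rfl fun x _ => hsq _
      _ = ∑ p : Rˣ × Rˣ, ∑ x : Fin k → R, χ (((p.1 : R) + (p.2 : R)) * ∑ i, x i * g i) :=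
          Finset.sum_comm
      _ = ∑ p : Rˣ × Rˣ, (if ∀ i, g i * σ ((p.1 : R) + (p.2 : R)) = 0 then q ^ k else 0) :=
          Finset.sum_congr rfl fun p _ => hP _
      _ = ∑ p ∈ Finset.univ.filter
            (fun p : Rˣ × Rˣ => ∀ i, g i * σ ((p.1 : R) + (p.2 : R)) = 0), q ^ k := by
          rw [Finset.sum_filter]
      _ = q ^ k * ((nR * Stab.card : ℕ) : ℂ) := by
          rw [Finset.sum_const, hpair, nsmul_eq_mul, mul_comm]
  -- expand the square and put it together
  have hexp : ∀ x : Fin k → R,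
      (1 - (nR : ℂ)⁻¹ * ∑ u : Rˣ, χ ((u : R) * ∑ i, x i * g i)) ^ 2
      = 1 - 2 * (nR : ℂ)⁻¹ * (∑ u : Rˣ, χ ((u : R) * ∑ i, x i * g i))
        + ((nR : ℂ)⁻¹) ^ 2 * (∑ u : Rˣ, χ ((u : R) * ∑ i, x i * g i)) ^ 2 := fun x => by ring
  rw [Finset.sum_congr rfl (fun x _ => hexp x)]
  rw [Finset.sum_add_distrib, Finset.sum_sub_distrib, ← Finset.mul_sum, ← Finset.mul_sum,
    hmid, hcross, mul_zero, sub_zero]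
  rw [Finset.sum_const, Finset.card_univ, Fintype.card_fun, Fintype.card_fin,
    nsmul_eq_mul, mul_one]
  -- final arithmetic
  have hOS : (Orb.card : ℂ) * (Stab.card : ℂ) = (nR : ℂ) := by
    exact_mod_cast congrArg (Nat.cast (R := ℂ)) horbstab
  have hO0 : (Orb.card : ℂ) ≠ 0 := by
    have hmem : (fun i => g i * ((1 : Rˣ) : R)) ∈ Orb :=
      Finset.mem_image_of_mem _ (Finset.mem_univ 1)
    exact Nat.cast_ne_zero.2 (Finset.card_ne_zero_of_mem hmem)
  have hS0 : (Stab.card : ℂ) ≠ 0 := Nat.cast_ne_zero.2 (Finset.card_ne_zero_of_mem h1Stab)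
  push_cast
  rw [← hOS]
  field_simp
  ring
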